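/- arXiv:1607.07412 — 4 statements merged into one kernel-verified Lean document; each statement's English description precedes it below -/
import Mathlib

section
/- Let f : (X,Ω) → (X,Ω) be a continuous map, and let Y ⊆ X be a subspace with the induced topology Ω|_Y such that f(Y) ⊆ Y. Then h_{Ω|_Y}(f|_Y) ≤ h_Ω(f). -/
open Set Topology Dynamics Filter

lemma coverEntropy_mono_set {X : Type*} [UniformSpace X] (T : X → X) {F G : Set X} (h : F ⊆ G) :
    coverEntropy T F ≤ coverEntropy T G := by
  refine iSup₂_mono fun U _ ↦ ?_
  refine limsup_le_limsup (Eventually.of_forall fun n ↦ ?_)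
  refine EReal.monotone_div_right_of_nonneg (Nat.cast_nonneg' n) (ENNReal.log_monotone
    (ENat.toENNReal_mono ?_))
  exact le_iInf₂ fun s hs ↦ (show IsDynCoverOf T F U n s from h.trans hs).coverMincard_le_card


/-- Topological entropy of a continuous self-map of a compact Hausdorff space, computed
with respect to the unique uniform structure compatible with the topology. -/
noncomputable def htop {Z : Type*} [TopologicalSpace Z] [CompactSpace Z] [T2Space Z]
    (g : Z → Z) : EReal :=
  @Dynamics.coverEntropy Z uniformSpaceOfCompactR1 g Set.univ

lemma htop_conj {A B : Type*} [TopologicalSpace A] [CompactSpace A] [T2Space A]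
    [TopologicalSpace B] [CompactSpace B] [T2Space B]
    (gA : A → A) (gB : B → B) (φ : A ≃ₜ B) (h : Function.Semiconj φ gA gB) :
    htop gB = htop gA := by
  unfold htop
  have himg : (φ : A → B) '' Set.univ = Set.univ := by
    rw [Set.image_univ]; exact φ.surjective.range_eq
  rw [← himg, Dynamics.coverEntropy_image_of_comap uniformSpaceOfCompactR1 h Set.univ]
  congr 1
  refine unique_uniformity_of_compact ?_ rfl
  rw [UniformSpace.toTopologicalSpace_comap]
  exact φ.isInducing.eq_induced.symm

lemma htop_restrict_le {Z : Type*} [TopologicalSpace Z] [CompactSpace Z] [T2Space Z]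
    (g : Z → Z) {C : Set Z} (hgC : Set.MapsTo g C C) [CompactSpace C] :
    htop (hgC.restrict g C C) ≤ htop g := by
  letI uZ : UniformSpace Z := uniformSpaceOfCompactR1
  have hu : (instUniformSpaceSubtype : UniformSpace C) = uniformSpaceOfCompactR1 :=
    unique_uniformity_of_compact rfl rfl
  unfold htop
  rw [← hu, Dynamics.coverEntropy_restrict hgC]
  exact coverEntropy_mono_set g (subset_univ C)

/-- `h_CR(f,Ω)`: the supremum of the topological entropies of the restrictions of `f` to
compact (Hausdorff) invariant subsets, or `0` if there is no such nonempty subset. -/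
noncomputable def hCR {X : Type*} [TopologicalSpace X] (f : X → X) : EReal :=
  sSup ({0} ∪ {h : EReal | ∃ (K : Set X) (hK : IsCompact K) (t2K : T2Space K)
    (hf : Set.MapsTo f K K),
    h = @htop K _ (isCompact_iff_compactSpace.mp hK) t2K (hf.restrict f K K)})

/-- `(f', X', Ω')` is an étale cover of `(f, X, Ω)` via `π`: `π` is a continuous surjection
with finite fibers satisfying `π ∘ f' = f ∘ π` (and `f'` is continuous). -/
def IsEtaleCover {X X' : Type*} [TopologicalSpace X] [TopologicalSpace X']
    (f : X → X) (f' : X' → X') (π : X' → X) : Prop :=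
  Continuous f' ∧ Continuous π ∧ Function.Surjective π ∧ (∀ x : X, (π ⁻¹' {x}).Finite) ∧
    π ∘ f' = f ∘ π

/-- `(f_Z, Z, Ω_Z)` is a compactification of `(f', X', Ω')` via the embedding `e`:
`Z` is compact Hausdorff (recorded by the instance arguments), `e` is a dense embedding
and `f_Z` is a continuous extension of `f'` along `e`. -/
def IsCompactification {X' Z : Type*} [TopologicalSpace X'] [TopologicalSpace Z]
    [CompactSpace Z] [T2Space Z] (f' : X' → X') (fZ : Z → Z) (e : X' → Z) : Prop :=
  Continuous fZ ∧ IsEmbedding e ∧ DenseRange e ∧ fZ ∘ e = e ∘ f'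

/-- The set of entropies of all compactifications of all étale covers of `(f, X, Ω)`,
i.e. of all members of the class `𝒜(Ω,f)`. -/
def etaleCompEntropies {X : Type u} [TopologicalSpace X] (f : X → X) : Set EReal :=
  {h : EReal | ∃ (X' : Type u) (tX' : TopologicalSpace X') (f' : X' → X') (π : X' → X),
    IsEtaleCover f f' π ∧
    ∃ (Z : Type u) (tZ : TopologicalSpace Z) (cZ : CompactSpace Z) (t2Z : T2Space Z)
      (fZ : Z → Z) (e : X' → Z),
      @IsCompactification X' Z tX' tZ cZ t2Z f' fZ e ∧ h = @htop Z tZ cZ t2Z fZ}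

/-- The entropy `h_Ω(f)` of an arbitrary topological dynamical system:
the maximum of `h_CR(f,Ω)` and `inf {h_top(f_Z) : (f_Z,Z,Ω_Z) ∈ 𝒜(Ω,f)}`. -/
noncomputable def hOmega {X : Type u} [TopologicalSpace X] (f : X → X) : EReal :=
  max (hCR f) (sInf (etaleCompEntropies f))

lemma hCR_restrict_le {X : Type u} [TopologicalSpace X] (f : X → X)
    (Y : Set X) (hY : Set.MapsTo f Y Y) :
    hCR (hY.restrict f Y Y) ≤ hCR f := by
  apply sSup_le_sSup
  rintro h (h0 | ⟨K, hK, t2K, hfK, rfl⟩)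
  · exact Or.inl h0
  right
  set fY := hY.restrict f Y Y with hfY
  set K' : Set X := Subtype.val '' K with hK'def
  have hK' : IsCompact K' := hK.image continuous_subtype_val
  haveI cK : CompactSpace K := isCompact_iff_compactSpace.mp hK
  haveI t2K := t2K
  have hmem : ∀ a : K', ∃ hy : (a : X) ∈ Y, (⟨(a : X), hy⟩ : ↥Y) ∈ K := by
    rintro ⟨a, y, hyK, rfl⟩
    exact ⟨y.2, by simpa using hyK⟩
  let j : K' → K := fun a ↦ ⟨⟨(a : X), (hmem a).choose⟩, (hmem a).choose_spec⟩
  have hjc : Continuous j :=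
    Continuous.subtype_mk (Continuous.subtype_mk continuous_subtype_val _) _
  have hji : Function.Injective j := by
    intro a b hab
    apply Subtype.ext
    have := congrArg (fun z : K ↦ ((z : ↥Y) : X)) hab
    simpa using this
  haveI t2K' : T2Space K' := T2Space.of_injective_continuous hji hjc
  have hfK' : Set.MapsTo f K' K' := by
    rintro a ⟨y, hyK, rfl⟩
    exact ⟨fY y, hfK hyK, (hY.val_restrict_apply y).symm⟩
  let eqv : K ≃ K' := Equiv.Set.image Subtype.val K Subtype.val_injective
  have heqv : ∀ x : K, ((eqv x : X)) = ((x : ↥Y) : X) := fun x ↦ rfl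
  have hcont : Continuous (eqv : K → K') :=
    Continuous.subtype_mk (continuous_subtype_val.comp continuous_subtype_val) _
  let φ : K ≃ₜ K' := hcont.homeoOfEquivCompactToT2 (f := eqv)
  have hsemi : Function.Semiconj φ (hfK.restrict fY K K) (hfK'.restrict f K' K') := by
    intro x
    apply Subtype.ext
    have h1 : ((φ ((hfK.restrict fY K K) x) : X)) = ((((hfK.restrict fY K K) x : ↥Y)) : X) :=
      heqv _
    have h2 : (((hfK.restrict fY K K) x : ↥Y)) = fY (x : ↥Y) := hfK.val_restrict_apply x
    have h3 : ((fY (x : ↥Y) : X)) = f ((x : ↥Y) : X) := hY.val_restrict_apply _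
    have h4 : (((hfK'.restrict f K' K') (φ x) : X)) = f ((φ x : X)) := hfK'.val_restrict_apply _
    rw [h1, h2, h3, h4]
    exact congrArg f (heqv x).symm
  haveI : CompactSpace K' := isCompact_iff_compactSpace.mp hK'
  exact ⟨K', hK', t2K', hfK', (htop_conj _ _ φ hsemi).symm⟩

lemma sInf_etale_restrict_le {X : Type u} [TopologicalSpace X] (f : X → X)
    (Y : Set X) (hY : Set.MapsTo f Y Y) :
    sInf (etaleCompEntropies (hY.restrict f Y Y)) ≤ sInf (etaleCompEntropies f) := by
  suffices key : ∀ x ∈ etaleCompEntropies f, ∃ y ∈ etaleCompEntropies (hY.restrict f Y Y), y ≤ x from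
    le_sInf fun x hx ↦ let ⟨_, hy, hyx⟩ := key x hx; (sInf_le hy).trans hyx
  rintro h ⟨X', tX', f', π, ⟨hf'c, hπc, hπs, hfin, hcomm⟩, Z, tZ, cZ, t2Z, fZ, e,
    ⟨hfZc, he, hdense, hext⟩, rfl⟩
  set fY := hY.restrict f Y Y with hfYdef
  set Y' : Set X' := π ⁻¹' Y with hY'def
  have hcommx : ∀ x, π (f' x) = f (π x) := fun x ↦ congrFun hcomm x
  have hextx : ∀ x, fZ (e x) = e (f' x) := fun x ↦ congrFun hext x
  have hf'Y' : Set.MapsTo f' Y' Y' := by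
    intro x hx
    have : π (f' x) ∈ Y := by rw [hcommx]; exact hY hx
    exact this
  set f'' := hf'Y'.restrict f' Y' Y' with hf''def
  set π' : ↥Y' → ↥Y := fun x ↦ ⟨π x, x.2⟩ with hπ'def
  have hcov : IsEtaleCover fY f'' π' := by
    refine ⟨Continuous.restrict hf'Y' hf'c,
      Continuous.subtype_mk (hπc.comp continuous_subtype_val) _, ?_, ?_, ?_⟩
    · rintro ⟨y, hy⟩
      obtain ⟨x, rfl⟩ := hπs y
      exact ⟨⟨x, hy⟩, rfl⟩
    · intro y
      have hsub : (π' ⁻¹' {y}) ⊆ Subtype.val ⁻¹' (π ⁻¹' {(y : X)}) := by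
        rintro x hx
        simp only [mem_preimage, mem_singleton_iff]
        exact congrArg Subtype.val hx
      exact (((hfin (y : X)).preimage Subtype.val_injective.injOn).subset hsub)
    · funext x
      exact Subtype.ext (hcommx (x : X'))
  set C : Set Z := closure (e '' Y') with hCdef
  haveI cC : CompactSpace C := isCompact_iff_compactSpace.mp isClosed_closure.isCompact
  have h2 : fZ '' (e '' Y') ⊆ e '' Y' := by
    rintro _ ⟨_, ⟨x, hx, rfl⟩, rfl⟩
    exact ⟨f' x, hf'Y' hx, (hextx x).symm⟩
  have hfZC : Set.MapsTo fZ C C := by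
    intro z hz
    have h1 : fZ z ∈ closure (fZ '' (e '' Y')) :=
      image_closure_subset_closure_image hfZc ⟨z, hz, rfl⟩
    exact closure_mono h2 h1
  set fC := hfZC.restrict fZ C C with hfCdef
  have he'mem : ∀ x : ↥Y', e (x : X') ∈ C := fun x ↦ subset_closure ⟨x.1, x.2, rfl⟩
  set e' : ↥Y' → ↥C := Set.codRestrict (fun x : ↥Y' ↦ e (x : X')) C he'mem with he'def
  have hcomp : IsCompactification f'' fC e' := by
    refine ⟨Continuous.restrict hfZC hfZc, ?_, ?_, ?_⟩
    · exact (he.comp IsEmbedding.subtypeVal).codRestrict C he'mem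
    · have hval : Subtype.val '' (Set.range e') = e '' Y' := by
        have hve : (Subtype.val ∘ e') = e ∘ (Subtype.val : ↥Y' → X') := rfl
        rw [← Set.range_comp, hve, Set.range_comp, Subtype.range_val]
      rw [DenseRange, dense_iff_closure_eq,
        IsInducing.subtypeVal.closure_eq_preimage_closure_image, hval]
      exact eq_univ_of_forall fun c ↦ c.2
    · funext x
      refine Subtype.ext ?_
      show ((fC (e' x) : Z)) = ((e' (f'' x) : Z))
      have h1 : ((fC (e' x) : Z)) = fZ (e (x : X')) := hfZC.val_restrict_apply _
      have h2' : ((e' (f'' x) : Z)) = e ((f'' x : X')) := rfl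
      have h3 : ((f'' x : X')) = f' (x : X') := hf'Y'.val_restrict_apply _
      rw [h1, h2', h3, hextx]
  refine ⟨htop fC, ⟨↥Y', inferInstance, f'', π', hcov, ↥C, inferInstance, cC,
    inferInstance, fC, e', hcomp, rfl⟩, htop_restrict_le fZ hfZC⟩

/-- If `Y ⊆ X` is an invariant subspace (with the induced topology) of a continuous map
`f : (X,Ω) → (X,Ω)`, then `h_{Ω|_Y}(f|_Y) ≤ h_Ω(f)`. -/
theorem stmt_1 {X : Type u} [TopologicalSpace X] (f : X → X) (hf : Continuous f)
    (Y : Set X) (hY : Set.MapsTo f Y Y) :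
    hOmega (hY.restrict f Y Y) ≤ hOmega f :=
  max_le_max (hCR_restrict_le f Y hY) (sInf_etale_restrict_le f Y hY)
end

section
/- Let f : (X,Ω) → (X,Ω) and f' : (X',Ω') → (X',Ω') be continuous maps and π : X' → X a continuous surjection with π ∘ f' = f ∘ π. Assume π is proper, i.e. the preimage of every compact set is compact. Then h_CR(f,Ω) ≤ h_CR(f',Ω'). -/
open Set Topology

lemma htop_le_of_semiconj {A B : Type*} [TopologicalSpace A] [CompactSpace A] [T2Space A]
    [TopologicalSpace B] [CompactSpace B] [T2Space B]
    {S : A → A} {T : B → B} {φ : A → B} (hc : Continuous φ) (hs : Function.Surjective φ)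
    (h : Function.Semiconj φ S T) : htop T ≤ htop S := by
  letI uA : UniformSpace A := uniformSpaceOfCompactR1
  letI uB : UniformSpace B := uniformSpaceOfCompactR1
  have huc : UniformContinuous φ := CompactSpace.uniformContinuous_of_continuous hc
  have := Dynamics.coverEntropy_image_le_of_uniformContinuous h huc Set.univ
  rwa [Set.image_univ, hs.range_eq] at this

/-- If `π : X' → X` is a proper continuous surjection with `π ∘ f' = f ∘ π`, then
`h_CR(f,Ω) ≤ h_CR(f',Ω')`. -/
theorem stmt_8 {X X' : Type*} [TopologicalSpace X] [T2Space X]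
    [TopologicalSpace X'] [T2Space X']
    (f : X → X) (f' : X' → X') (π : X' → X)
    (hf : Continuous f) (hf' : Continuous f') (hπ : Continuous π)
    (hsurj : Function.Surjective π) (hsemi : π ∘ f' = f ∘ π)
    (hproper : ∀ K : Set X, IsCompact K → IsCompact (π ⁻¹' K)) :
    hCR f ≤ hCR f' := by
  apply sSup_le
  rintro h (h0 | ⟨K, hK, t2K, hfK, rfl⟩)
  · exact le_sSup (Or.inl h0)
  · set K' := π ⁻¹' K with hK'def
    have hK' : IsCompact K' := hproper K hK
    have t2K' : T2Space K' := inferInstance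
    have hfK' : Set.MapsTo f' K' K' := by
      intro x hx
      have : π (f' x) = f (π x) := congrFun hsemi x
      simp only [hK'def, Set.mem_preimage] at hx ⊢
      rw [this]
      exact hfK hx
    refine le_trans ?_ (le_sSup (Or.inr ⟨K', hK', t2K', hfK', rfl⟩))
    haveI : CompactSpace K := isCompact_iff_compactSpace.mp hK
    haveI : CompactSpace K' := isCompact_iff_compactSpace.mp hK'
    have hmt : Set.MapsTo π K' K := fun x hx => hx
    refine htop_le_of_semiconj (φ := hmt.restrict π K' K) ?_ ?_ ?_
    · exact hπ.restrict hmt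
    · rintro ⟨y, hy⟩
      obtain ⟨x, rfl⟩ := hsurj y
      exact ⟨⟨x, hy⟩, rfl⟩
    · intro x
      exact Subtype.ext (congrFun hsemi x)
end

section
/- Let f : ℕ → ℕ, f(n) = n + 1, where ℕ carries the subspace topology Ω induced from ℝ (equivalently, the discrete topology). Then h_Ω(f) = 0. -/
open Set Topology

noncomputable section Aux15
namespace Aux15
open Filter Uniformity UniformSpace ENNReal Dynamics SetRel




def u (n : ℕ) : ℝ := ((n : ℝ) + 1)⁻¹

lemma u_pos (n : ℕ) : 0 < u n := by unfold u; positivity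

lemma u_anti : StrictAnti u := by
  intro m n h
  unfold u
  apply inv_strictAnti₀ (by positivity)
  exact_mod_cast by omega

lemma u_tendsto : Tendsto u atTop (𝓝 0) := by
  have := tendsto_one_div_add_atTop_nhds_zero_nat (𝕜 := ℝ)
  simp only [one_div] at this
  exact this

def Zset : Set ℝ := insert 0 (Set.range u)

lemma Zset_compact : IsCompact Zset := u_tendsto.isCompact_insert_range

lemma Zset_nonneg {x : ℝ} (hx : x ∈ Zset) : 0 ≤ x := by
  rcases hx with rfl | ⟨n, rfl⟩
  · exact le_refl 0
  · exact (u_pos n).le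

abbrev Z : Type := ↥Zset

instance : CompactSpace Z := isCompact_iff_compactSpace.mp Zset_compact

lemma u_key (n : ℕ) : u n / (1 + u n) = u (n + 1) := by
  have h1 : ((n : ℝ) + 1) ≠ 0 := by positivity
  have h2 : ((n : ℝ) + 1 + 1) ≠ 0 := by positivity
  unfold u
  field_simp [u]
  push_cast
  ring

lemma g_mem (z : Z) : (z : ℝ) / (1 + (z : ℝ)) ∈ Zset := by
  rcases z.2 with h | ⟨n, h⟩
  · rw [h]; simp [Zset]
  · rw [← h, u_key n]; exact Or.inr ⟨n + 1, rfl⟩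

def g : Z → Z := fun z => ⟨(z : ℝ) / (1 + (z : ℝ)), g_mem z⟩

lemma g_cont : Continuous g := by
  apply Continuous.subtype_mk
  apply Continuous.div continuous_subtype_val (by continuity)
  intro z
  have := Zset_nonneg z.2
  positivity

def e (n : ℕ) : Z := ⟨u n, Or.inr ⟨n, rfl⟩⟩

def z0 : Z := ⟨0, Or.inl rfl⟩

lemma g_e (n : ℕ) : g (e n) = e (n + 1) := Subtype.ext (u_key n)

lemma g_z0 : g z0 = z0 := Subtype.ext (by simp [g, z0])

lemma g_comm : g ∘ e = e ∘ (fun n : ℕ => n + 1) := funext fun n => g_e n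

lemma iter_e (m k : ℕ) : g^[k] (e m) = e (m + k) := by
  induction k with
  | zero => rfl
  | succ k ih => rw [Function.iterate_succ_apply', ih, g_e, Nat.add_assoc]

lemma iter_z0 (k : ℕ) : g^[k] z0 = z0 := by
  induction k with
  | zero => rfl
  | succ k ih => rw [Function.iterate_succ_apply', ih, g_z0]

def gap (n : ℕ) : ℝ := u n - u (n + 1)

lemma gap_pos (n : ℕ) : 0 < gap n := sub_pos.mpr (u_anti (Nat.lt_succ_self n))

lemma gap_anti {m n : ℕ} (h : m ≤ n) : gap n ≤ gap m := by
  have hm : ∀ j : ℕ, gap j = (((j : ℝ) + 1) * ((j : ℝ) + 2))⁻¹ := by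
    intro j
    have h1 : ((j : ℝ) + 1) ≠ 0 := by positivity
    have h2 : ((j : ℝ) + 1 + 1) ≠ 0 := by positivity
    unfold gap u
    field_simp [gap, u]
    push_cast
    ring
  rw [hm, hm]
  apply inv_anti₀ (by positivity)
  have : (m : ℝ) ≤ n := by exact_mod_cast h
  nlinarith

lemma dist_ge {m n : ℕ} (h : m ≠ n) : gap n ≤ |u m - u n| := by
  rcases lt_or_gt_of_ne h with hlt | hgt
  · -- m < n, u m > u n
    have h1 : u n ≤ u (m + 1) := u_anti.antitone hlt
    have h2 : gap m ≤ u m - u n := by simp only [gap]; linarith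
    have := gap_anti (Nat.le_of_lt hlt)
    rw [abs_of_pos (by linarith [u_anti hlt])]
    linarith
  · -- m > n, u m ≤ u (n+1)
    have h1 : u m ≤ u (n + 1) := u_anti.antitone hgt
    rw [abs_of_neg (by linarith [u_anti hgt])]
    simp only [gap] at *
    linarith

lemma e_injective : Function.Injective e := by
  intro m n h
  by_contra hne
  have h1 := dist_ge hne
  have h0 := gap_pos n
  have h2 : u m = u n := congrArg Subtype.val h
  rw [h2, sub_self, abs_zero] at h1
  linarith

lemma e_embedding : IsEmbedding e := by
  refine ⟨isInducing_iff_nhds.mpr fun n => ?_, e_injective⟩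
  rw [nhds_discrete ℕ]
  apply le_antisymm
  · exact (tendsto_pure_nhds e n).le_comap
  · -- comap ≤ pure: {n} ∈ comap e (𝓝 (e n))
    rw [Filter.le_pure_iff, Filter.mem_comap]
    refine ⟨Metric.ball (e n) (gap n), Metric.ball_mem_nhds _ (gap_pos n), ?_⟩
    intro m hm
    have hm' : |u m - u n| < gap n := by
      simpa [e, Subtype.dist_eq, Real.dist_eq] using hm
    by_contra hne
    simp only [Set.mem_singleton_iff] at hne
    have := dist_ge hne
    linarith

lemma e_dense : DenseRange e := by
  intro z
  rcases z.2 with h | ⟨n, h⟩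
  · have hz : z = z0 := Subtype.ext h
    rw [hz]
    exact mem_closure_of_tendsto (tendsto_subtype_rng.mpr u_tendsto)
      (Filter.Eventually.of_forall fun n => mem_range_self n)
  · exact subset_closure ⟨n, Subtype.ext h⟩


lemma uniform_eq :
    @uniformSpaceOfCompactR1 Z _ _ _ = (inferInstance : UniformSpace Z) :=
  unique_uniformity_of_compact rfl rfl

open Dynamics in
lemma coverEntropyEntourage_le_zero {U : Set (Z × Z)} (hU : U ∈ 𝓤 Z) :
    coverEntropyEntourage g Set.univ U ≤ 0 := by
  obtain ⟨ε, ε_pos, hε⟩ := Metric.mem_uniformity_dist.mp hU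
  set V : Set (Z × Z) := {p | dist p.1 p.2 < ε / 2} with hV
  haveI V_symm : SetRel.IsSymm V := ⟨fun a b h => by simpa [V, dist_comm] using h⟩
  have VV_U : V ○ V ⊆ U := by
    rintro ⟨x, y⟩ ⟨w, h1, h2⟩
    simp only [V, Set.mem_setOf_eq] at h1 h2
    exact hε (lt_of_le_of_lt (dist_triangle x w y) (by linarith))
  obtain ⟨N, hN⟩ := (u_tendsto.eventually (gt_mem_nhds (half_pos ε_pos))).exists
  classical
  set s : Finset Z := insert z0 ((Finset.range N).image e) with hs
  have s_cover : ∀ n : ℕ, IsDynCoverOf g Set.univ V n ↑s := by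
    intro n
    intro z _
    rcases z.2 with h | ⟨m, h⟩
    · refine ⟨z0, by simp [s], ?_⟩
      have hz : z = z0 := Subtype.ext h
      rw [hz]
      rw [Dynamics.mem_dynEntourage]
      intro k _
      simp only [V, Set.mem_setOf_eq, dist_self]
      exact half_pos ε_pos
    · have hz : z = e m := Subtype.ext h.symm
      rcases lt_or_ge m N with hm | hm
      · refine ⟨e m, by simp [s]; right; exact ⟨m, hm, rfl⟩, ?_⟩
        rw [hz]
        rw [Dynamics.mem_dynEntourage]
        intro k _
        simp only [V, Set.mem_setOf_eq, dist_self]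
        exact half_pos ε_pos
      · refine ⟨z0, by simp [s], ?_⟩
        rw [hz]
        rw [Dynamics.mem_dynEntourage]
        intro k _
        rw [iter_z0, iter_e]
        simp only [V, Set.mem_setOf_eq]
        have : dist (e (m + k)) z0 = u (m + k) := by
          simp [Subtype.dist_eq, z0, e, Real.dist_eq, abs_of_pos (u_pos (m + k))]
        rw [this]
        exact lt_of_le_of_lt (u_anti.antitone (by omega)) hN
  have card_ne : (s.card : ℝ≥0∞) ≠ 0 := by
    have : z0 ∈ s := by simp [s]
    simp [Finset.card_ne_zero_of_mem this]
  have hlog_bot : ENNReal.log (s.card : ℝ≥0∞) ≠ ⊥ := by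
    simp [ENNReal.log_eq_bot_iff, card_ne]
  have hlog_top : ENNReal.log (s.card : ℝ≥0∞) ≠ ⊤ := by
    simp [ENNReal.log_eq_top_iff]
  have key : ∀ n : ℕ, 1 ≤ n →
      coverEntropyEntourage g Set.univ (V ○ V) ≤ ENNReal.log (s.card : ℝ≥0∞) / (n : EReal) := by
    intro n hn
    exact (s_cover n).coverEntropyEntourage_le_log_card_div (Set.mapsTo_univ g Set.univ)
      (by omega)
  refine le_trans (coverEntropyEntourage_antitone g Set.univ VV_U) ?_
  have lim := EReal.tendsto_const_div_atTop_nhds_zero_nat hlog_bot hlog_top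
  exact ge_of_tendsto lim (Filter.eventually_atTop.2 ⟨1, fun n hn => key n hn⟩)


lemma htop_bot {W : Type} [TopologicalSpace W] [CompactSpace W] [T2Space W] [IsEmpty W]
    (T : W → W) : htop T ≤ 0 := by
  unfold htop
  have huniv : (Set.univ : Set W) = ∅ := Set.univ_eq_empty_iff.mpr ‹_›
  rw [huniv]
  exact (@Dynamics.coverEntropy_empty W T uniformSpaceOfCompactR1).trans_le bot_le

lemma htop_g_le : htop g ≤ 0 := by
  unfold htop
  rw [uniform_eq]
  exact iSup₂_le fun U hU => coverEntropyEntourage_le_zero hU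

lemma mem_etale : htop g ∈ etaleCompEntropies (fun n : ℕ => n + 1) := by
  refine ⟨ℕ, inferInstance, (fun n : ℕ => n + 1), id,
    ⟨continuous_of_discreteTopology, continuous_id, Function.surjective_id,
      fun x => by simp, rfl⟩,
    Z, inferInstance, inferInstance, inferInstance, g, e,
    ⟨g_cont, e_embedding, e_dense, g_comm⟩, rfl⟩

lemma hCR_zero : hCR (fun n : ℕ => n + 1) = 0 := by
  apply le_antisymm
  · apply sSup_le
    rintro h (rfl | ⟨K, hK, t2K, hf, rfl⟩)
    · exact le_refl 0
    · have hKe : K = ∅ := by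
        by_contra hne
        have hne' := Set.nonempty_iff_ne_empty.mpr hne
        obtain ⟨m, hm, hmax⟩ := (@Set.toFinite _ K hK.finite_of_discrete).exists_maximalFor id K hne'
        have h1 : m + 1 ∈ K := hf hm
        have := hmax h1 (by simp)
        simp only [id] at this
        omega
      subst hKe
      exact htop_bot _
  · exact le_sSup (Or.inl rfl)

end Aux15
end Aux15

/-- For `f : ℕ → ℕ`, `f(n) = n + 1` (with the discrete topology induced from `ℝ`),
`h_Ω(f) = 0`. -/
theorem stmt_15 : hOmega (fun n : ℕ => n + 1) = 0 := by
  have h2 : sInf (etaleCompEntropies (fun n : ℕ => n + 1)) ≤ 0 :=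
    le_trans (sInf_le Aux15.mem_etale) Aux15.htop_g_le
  unfold hOmega
  rw [Aux15.hCR_zero]
  exact max_eq_left h2
end

section
/- Let f : ℝ → ℝ, f(x) = 2x, where ℝ carries its usual topology Ω. Then h_Ω(f) = 0. -/
open Set Topology

/-! ### Auxiliary constructions: the compactification `[-1,1]` of the doubling map -/

section Doubling

open Dynamics Filter Uniformity UniformSpace SetRel

local notation "ZI" => Set.Icc (-1:ℝ) 1

lemma mem_ZI {v : ℝ} (h : |v| ≤ 1) : v ∈ ZI := by
  rw [Set.mem_Icc]; constructor <;> [linarith [abs_le.mp h]; linarith [abs_le.mp h]]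

lemma gZ_mem {v : ℝ} (h : v ∈ ZI) : 2*v/(1+|v|) ∈ ZI := by
  have hv : |v| ≤ 1 := abs_le.mpr ⟨h.1, h.2⟩
  apply mem_ZI
  rw [abs_div, abs_of_pos (by positivity : (0:ℝ) < 1+|v|)]
  rw [div_le_one (by positivity)]
  rw [abs_mul]
  simp only [abs_two]
  linarith

lemma gZ'_mem {v : ℝ} (h : v ∈ ZI) : v/(2-|v|) ∈ ZI := by
  have hv : |v| ≤ 1 := abs_le.mpr ⟨h.1, h.2⟩
  have h2 : (0:ℝ) < 2 - |v| := by linarith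
  apply mem_ZI
  rw [abs_div, abs_of_pos h2, div_le_one h2]
  linarith

lemma eZ_mem (x : ℝ) : x/(1+|x|) ∈ ZI := by
  apply mem_ZI
  rw [abs_div, abs_of_pos (by positivity : (0:ℝ) < 1+|x|), div_le_one (by positivity)]
  linarith [abs_nonneg x]

noncomputable def gZ (z : ↥ZI) : ↥ZI := ⟨2*z.val/(1+|z.val|), gZ_mem z.2⟩
noncomputable def gZ' (z : ↥ZI) : ↥ZI := ⟨z.val/(2-|z.val|), gZ'_mem z.2⟩
noncomputable def eZ (x : ℝ) : ↥ZI := ⟨x/(1+|x|), eZ_mem x⟩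

lemma key_ineq {a b : ℝ} (h : a < b) : a * (1+|b|) < b * (1+|a|) := by
  rcases abs_cases a with ⟨h1,h2⟩|⟨h1,h2⟩ <;> rcases abs_cases b with ⟨h3,h4⟩|⟨h3,h4⟩ <;>
    nlinarith

lemma eZ_strictMono : StrictMono eZ := by
  intro a b h
  rw [show (eZ a < eZ b) ↔ (a/(1+|a|) < b/(1+|b|)) from Iff.rfl]
  rw [div_lt_div_iff₀ (by positivity) (by positivity)]
  exact key_ineq h

lemma gZ_strictMono : StrictMono gZ := by
  intro a b h
  have h' : a.val < b.val := h
  show (2*a.val/(1+|a.val|) : ℝ) < 2*b.val/(1+|b.val|)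
  rw [div_lt_div_iff₀ (by positivity) (by positivity)]
  nlinarith [key_ineq h']

lemma gZ_leftInv : Function.LeftInverse gZ gZ' := by
  intro z
  apply Subtype.ext
  show (2*(z.val/(2-|z.val|))/(1+|z.val/(2-|z.val|)|) : ℝ) = z.val
  have hv : |z.val| ≤ 1 := abs_le.mpr ⟨z.2.1, z.2.2⟩
  have h2 : (0:ℝ) < 2 - |z.val| := by linarith
  rw [abs_div, abs_of_pos h2]
  rw [show (1 + |z.val|/(2-|z.val|)) = 2/(2-|z.val|) by field_simp; ring]
  field_simp

lemma gZ_eZ (x : ℝ) : gZ (eZ x) = eZ (2*x) := by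
  apply Subtype.ext
  show (2*(x/(1+|x|))/(1+|x/(1+|x|)|) : ℝ) = 2*x/(1+|2*x|)
  have h1 : (0:ℝ) < 1+|x| := by positivity
  rw [abs_div, abs_of_pos h1]
  rw [show (1 + |x|/(1+|x|)) = (1+2*|x|)/(1+|x|) by field_simp; ring]
  rw [abs_mul, abs_two]
  field_simp

lemma gZ_continuous : Continuous gZ := by
  apply Continuous.subtype_mk
  exact (continuous_const.mul continuous_subtype_val).div
    (continuous_const.add continuous_subtype_val.abs) (fun z => by positivity)

lemma range_eZ : Set.range eZ = {z : ↥ZI | z.val ∈ Set.Ioo (-1:ℝ) 1} := by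
  ext z
  constructor
  · rintro ⟨x, rfl⟩
    have h1 : (0:ℝ) < 1+|x| := by positivity
    have : |x/(1+|x|)| < 1 := by
      rw [abs_div, abs_of_pos h1, div_lt_one h1]; linarith
    have := abs_lt.mp this
    exact ⟨this.1, this.2⟩
  · rintro ⟨h1, h2⟩
    have hv : |z.val| < 1 := abs_lt.mpr ⟨h1, h2⟩
    have hd : (0:ℝ) < 1 - |z.val| := by linarith
    refine ⟨z.val/(1-|z.val|), Subtype.ext ?_⟩
    show (z.val/(1-|z.val|))/(1+|z.val/(1-|z.val|)|) = z.val
    rw [abs_div, abs_of_pos hd]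
    rw [show (1 + |z.val|/(1-|z.val|)) = 1/(1-|z.val|) by field_simp; ring]
    field_simp

lemma eZ_denseRange : DenseRange eZ := by
  intro z
  rw [closure_subtype, range_eZ]
  have : Subtype.val '' {z : ↥ZI | z.val ∈ Set.Ioo (-1:ℝ) 1} = Set.Ioo (-1:ℝ) 1 := by
    ext v
    simp only [Set.mem_image, Set.mem_setOf_eq]
    constructor
    · rintro ⟨w, hw, rfl⟩; exact hw
    · intro hv; exact ⟨⟨v, Set.Ioo_subset_Icc_self hv⟩, hv, rfl⟩
  rw [this, closure_Ioo (by norm_num : (-1:ℝ) ≠ 1)]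
  exact z.2

lemma eZ_embedding : IsEmbedding eZ := by
  apply eZ_strictMono.isEmbedding_of_ordConnected
  rw [range_eZ]
  constructor
  rintro z1 ⟨h1,h2⟩ z2 ⟨h3,h4⟩ c ⟨hc1, hc2⟩
  have hc1' : z1.val ≤ c.val := hc1
  have hc2' : c.val ≤ z2.val := hc2
  exact ⟨lt_of_lt_of_le h1 hc1', lt_of_le_of_lt hc2' h4⟩

lemma cover_bound {δ : ℝ} (hδ : 0 < δ) {n : ℕ} (hn : 0 < n) :
    ∃ s : Finset ↥ZI, s.card ≤ n * (⌈2/δ⌉₊ + 2) ∧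
      IsDynCoverOf gZ Set.univ {p : ↥ZI × ↥ZI | dist p.1 p.2 ≤ δ} n s := by
  set M := ⌈2/δ⌉₊ + 2 with hM
  set pt : ℕ × ℕ → ↥ZI := fun p => gZ'^[p.1] (Set.projIcc (-1) 1 (by norm_num) (-1 + p.2 * δ))
  set s : Finset ↥ZI := Finset.image pt (Finset.range n ×ˢ Finset.range M) with hs
  have hMpos : 0 < M := by positivity
  refine ⟨s, ?_, ?_⟩
  · calc s.card ≤ (Finset.range n ×ˢ Finset.range M).card := Finset.card_image_le
      _ = n * M := by rw [Finset.card_product, Finset.card_range, Finset.card_range]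
  have hbot : (⟨-1, by norm_num⟩ : ↥ZI) ∈ s := by
    rw [hs, Finset.mem_image]
    refine ⟨(0,0), by simp [hn, hMpos], ?_⟩
    simp only [pt, Function.iterate_zero, id_eq, Nat.cast_zero, zero_mul, add_zero]
    rw [Set.projIcc_of_mem _ (by norm_num : (-1:ℝ) ∈ ZI)]
  have htop1 : (⟨1, by norm_num⟩ : ↥ZI) ∈ s := by
    rw [hs, Finset.mem_image]
    refine ⟨(0, M-1), ?_, ?_⟩
    · simp [hn, hMpos, Nat.sub_lt hMpos]
    · simp only [pt, Function.iterate_zero, id_eq]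
      rw [Set.projIcc_of_right_le]
      have h1 : (2:ℝ)/δ ≤ (⌈2/δ⌉₊ : ℝ) := Nat.le_ceil _
      have h2 : ((M-1 : ℕ) : ℝ) = (⌈2/δ⌉₊ : ℝ) + 1 := by
        rw [hM]; push_cast [Nat.add_sub_cancel]; ring
      have h3 : (2:ℝ)/δ * δ = 2 := div_mul_cancel₀ 2 (ne_of_gt hδ)
      nlinarith
  intro x _
  set A := s.filter (fun t => t ≤ x) with hA
  set B := s.filter (fun t => x ≤ t) with hB
  have hAne : A.Nonempty := ⟨⟨-1, by norm_num⟩, Finset.mem_filter.mpr ⟨hbot, x.2.1⟩⟩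
  have hBne : B.Nonempty := ⟨⟨1, by norm_num⟩, Finset.mem_filter.mpr ⟨htop1, x.2.2⟩⟩
  set p := A.max' hAne with hp
  set q := B.min' hBne with hq
  have hps : p ∈ s := (Finset.mem_filter.mp (A.max'_mem hAne)).1
  have hpx : p ≤ x := (Finset.mem_filter.mp (A.max'_mem hAne)).2
  have hxq : x ≤ q := (Finset.mem_filter.mp (B.min'_mem hBne)).2
  have key : ∀ i < n, ((gZ^[i] q : ↥ZI) : ℝ) - ((gZ^[i] p : ↥ZI) : ℝ) ≤ δ := by
    intro i hi
    by_contra hcon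
    push_neg at hcon
    set a : ℝ := ((gZ^[i] p : ↥ZI) : ℝ) with ha
    set b : ℝ := ((gZ^[i] q : ↥ZI) : ℝ) with hb
    have ha1 : -1 ≤ a := (gZ^[i] p).2.1
    have ha2 : a ≤ 1 := (gZ^[i] p).2.2
    have hb2 : b ≤ 1 := (gZ^[i] q).2.2
    set k := ⌊(a+1)/δ⌋₊ + 1 with hk
    set w : ℝ := -1 + k * δ with hw
    have hnn : 0 ≤ (a+1)/δ := div_nonneg (by linarith) hδ.le
    have hwa : a < w := by
      have := Nat.lt_floor_add_one ((a+1)/δ)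
      have : (a+1)/δ < (k : ℝ) := by push_cast [hk]; linarith
      rw [div_lt_iff₀ hδ] at this
      simp only [hw]; linarith
    have hwb : w < b := by
      have h1 : (⌊(a+1)/δ⌋₊ : ℝ) ≤ (a+1)/δ := Nat.floor_le hnn
      have h2 : (k:ℝ) * δ ≤ (a+1) + δ := by
        push_cast [hk]
        have := mul_le_mul_of_nonneg_right h1 (le_of_lt hδ)
        rw [div_mul_cancel₀ _ (ne_of_gt hδ)] at this
        nlinarith
      simp only [hw]; linarith
    have hkM : k < M := by
      have h1 : ⌊(a+1)/δ⌋₊ ≤ ⌊2/δ⌋₊ := Nat.floor_le_floor (by gcongr; linarith)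
      have h2 : ⌊(2:ℝ)/δ⌋₊ ≤ ⌈(2:ℝ)/δ⌉₊ := Nat.floor_le_ceil _
      omega
    have hwmem : w ∈ ZI := ⟨by linarith, by linarith⟩
    set t := gZ'^[i] ⟨w, hwmem⟩ with ht
    have hts : t ∈ s := by
      rw [hs, Finset.mem_image]
      refine ⟨(i, k), by simp [hi, hkM], ?_⟩
      simp only [pt]
      rw [Set.projIcc_of_mem _ hwmem]
    have hgt : gZ^[i] t = ⟨w, hwmem⟩ := (gZ_leftInv.iterate i) ⟨w, hwmem⟩
    have hpt : p < t := by
      rw [← (gZ_strictMono.iterate i).lt_iff_lt, hgt]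
      exact Subtype.mk_lt_mk.mpr hwa
    have htq : t < q := by
      rw [← (gZ_strictMono.iterate i).lt_iff_lt, hgt]
      exact Subtype.mk_lt_mk.mpr hwb
    rcases le_total t x with h | h
    · exact absurd (A.le_max' t (Finset.mem_filter.mpr ⟨hts, h⟩)) (not_le.mpr hpt)
    · exact absurd (B.min'_le t (Finset.mem_filter.mpr ⟨hts, h⟩)) (not_le.mpr htq)
  refine ⟨p, hps, ?_⟩
  show (x, p) ∈ dynEntourage gZ {p : ↥ZI × ↥ZI | dist p.1 p.2 ≤ δ} n
  rw [mem_dynEntourage]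
  intro i hi
  show dist (gZ^[i] x) (gZ^[i] p) ≤ δ
  have h1 : ((gZ^[i] p : ↥ZI) : ℝ) ≤ ((gZ^[i] x : ↥ZI) : ℝ) :=
    Subtype.coe_le_coe.mpr ((gZ_strictMono.iterate i).monotone hpx)
  have h2 : ((gZ^[i] x : ↥ZI) : ℝ) ≤ ((gZ^[i] q : ↥ZI) : ℝ) :=
    Subtype.coe_le_coe.mpr ((gZ_strictMono.iterate i).monotone hxq)
  rw [Subtype.dist_eq, Real.dist_eq, abs_of_nonneg (by linarith)]
  linarith [key i hi]

lemma real_limit (M : ℕ) (hM : 0 < M) :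
    Tendsto (fun n : ℕ => Real.log (n * M) / n) atTop (𝓝 0) := by
  have h1 : Tendsto (fun x : ℝ => Real.log x / x) atTop (𝓝 0) := by
    have := Real.tendsto_pow_log_div_mul_add_atTop 1 0 1 one_ne_zero
    simpa using this
  have h2 : Tendsto (fun n : ℕ => ((n : ℝ) * M)) atTop atTop :=
    Tendsto.atTop_mul_const (by exact_mod_cast hM) tendsto_natCast_atTop_atTop
  have h3 := (h1.comp h2).const_mul (M : ℝ)
  rw [mul_zero] at h3
  apply h3.congr'
  filter_upwards [eventually_ge_atTop 1] with n hn
  have hn' : (n:ℝ) ≠ 0 := by positivity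
  have hM' : (M:ℝ) ≠ 0 := by positivity
  simp only [Function.comp]
  field_simp

lemma entourage_entropy_le {ε : ℝ} (hε : 0 < ε) :
    coverEntropyEntourage gZ Set.univ {p : ↥ZI × ↥ZI | dist p.1 p.2 < ε} ≤ 0 := by
  set δ := ε/4 with hδdef
  have hδ : 0 < δ := by positivity
  set V : Set (↥ZI × ↥ZI) := {p | dist p.1 p.2 ≤ δ} with hV
  have V_symm : SetRel.IsSymm V := by
    refine ⟨fun z1 z2 h => ?_⟩
    simpa [hV, dist_comm] using h
  have hVV : V ○ V ⊆ {p : ↥ZI × ↥ZI | dist p.1 p.2 < ε} := by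
    rintro ⟨z1, z2⟩ ⟨y, h1, h2⟩
    simp only [hV, Set.mem_setOf_eq] at h1 h2
    simp only [Set.mem_setOf_eq]
    linarith [dist_triangle z1 y z2]
  apply le_trans (coverEntropyEntourage_antitone gZ Set.univ hVV) ?_
  set M := ⌈2/δ⌉₊ + 2 with hM
  have hMpos : 0 < M := by positivity
  have hb : ∀ n : ℕ, 0 < n →
      coverEntropyEntourage gZ Set.univ (V ○ V) ≤ ((Real.log (n * M) / n : ℝ) : EReal) := by
    intro n hn
    obtain ⟨s, hcard, hcov⟩ := cover_bound hδ hn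
    have h1 := hcov.coverEntropyEntourage_le_log_card_div (Set.mapsTo_univ gZ Set.univ)
      hn.ne'
    apply h1.trans
    have h2 : ENNReal.log s.card ≤ ENNReal.log ((n*M : ℕ) : ENNReal) := by
      apply ENNReal.log_monotone
      exact_mod_cast hcard
    have h3 : ENNReal.log ((n*M : ℕ) : ENNReal) = ((Real.log (n*M) : ℝ) : EReal) := by
      rw [ENNReal.log_pos_real (by exact_mod_cast Nat.mul_ne_zero hn.ne' hMpos.ne')
        (ENNReal.natCast_ne_top _)]
      rw [ENNReal.toReal_natCast]
      norm_cast
    calc ENNReal.log s.card / (n : EReal) ≤ ENNReal.log ((n*M : ℕ) : ENNReal) / (n : EReal) := by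
          apply EReal.monotone_div_right_of_nonneg (by exact_mod_cast Nat.zero_le n) h2
      _ = ((Real.log (n*M) / n : ℝ) : EReal) := by
          rw [h3, ← EReal.coe_coe_eq_natCast, ← EReal.coe_div]
  have hlim : Tendsto (fun n : ℕ => ((Real.log (n * M) / n : ℝ) : EReal)) atTop (𝓝 (0 : EReal)) := by
    rw [show ((0:EReal)) = ((0:ℝ) : EReal) by rfl]
    rw [EReal.tendsto_coe]
    exact real_limit M hMpos
  exact ge_of_tendsto hlim (eventually_atTop.mpr ⟨1, fun n hn => hb n hn⟩)

lemma gZ_coverEntropy_le : coverEntropy gZ (Set.univ : Set ↥ZI) ≤ 0 := by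
  rw [coverEntropy_eq_iSup_basis Metric.uniformity_basis_dist gZ Set.univ]
  exact iSup₂_le fun ε hε => entourage_entropy_le hε

lemma coverEntropy_le_zero_of_subsingleton {Y : Type*} [UniformSpace Y] [Subsingleton Y]
    (T : Y → Y) : coverEntropy T Set.univ ≤ 0 := by
  rcases isEmpty_or_nonempty Y with h | h
  · rw [Set.univ_eq_empty_iff.mpr h, coverEntropy_empty]; exact bot_le
  · refine iSup₂_le fun U hU => ?_
    have hUuniv : U = Set.univ := by
      apply Set.eq_univ_of_forall
      intro p
      have : p = (p.1, p.1) := by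
        rw [Prod.ext_iff]; exact ⟨rfl, Subsingleton.elim _ _⟩
      rw [this]
      exact refl_mem_uniformity hU
    rw [hUuniv, coverEntropyEntourage_univ T Set.univ_nonempty]

lemma doubling_invariant_subsingleton {K : Set ℝ} (hK : IsCompact K)
    (hf : Set.MapsTo (fun x : ℝ => 2 * x) K K) : K ⊆ {0} := by
  intro x hx
  simp only [Set.mem_singleton_iff]
  by_contra hx0
  obtain ⟨C, hC⟩ := isBounded_iff_forall_norm_le.mp hK.isBounded
  have horb : ∀ n : ℕ, (2:ℝ)^n * x ∈ K := by
    intro n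
    induction n with
    | zero => simpa using hx
    | succ n ih =>
      have := hf ih
      simpa [pow_succ] using by
        convert this using 1
        ring
  have hxpos : 0 < |x| := abs_pos.mpr hx0
  obtain ⟨n, hn⟩ := pow_unbounded_of_one_lt (C / |x|) (one_lt_two (α := ℝ))
  have := hC _ (horb n)
  rw [Real.norm_eq_abs, abs_mul, abs_pow, abs_two] at this
  rw [div_lt_iff₀ hxpos] at hn
  linarith

lemma hCR_doubling : hCR (fun x : ℝ => 2 * x) = 0 := by
  apply le_antisymm
  · apply sSup_le
    rintro h (hh | ⟨K, hK, t2K, hf, rfl⟩)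
    · simp only [Set.mem_singleton_iff] at hh; rw [hh]
    · have hsub : K ⊆ {0} := doubling_invariant_subsingleton hK hf
      haveI : Subsingleton ↥K :=
        (Set.subsingleton_coe K).mpr (Set.subsingleton_of_subset_singleton hsub)
      exact @coverEntropy_le_zero_of_subsingleton ↥K uniformSpaceOfCompactR1 _ _
  · exact le_sSup (Set.mem_union_left _ rfl)

lemma htop_gZ_le : htop gZ ≤ 0 := by
  have huniq : (@uniformSpaceOfCompactR1 ↥ZI _ _ _) = (inferInstance : UniformSpace ↥ZI) :=
    unique_uniformity_of_compact rfl rfl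
  show @Dynamics.coverEntropy ↥ZI uniformSpaceOfCompactR1 gZ Set.univ ≤ 0
  rw [huniq]
  exact gZ_coverEntropy_le

lemma mem_etale : htop gZ ∈ etaleCompEntropies (fun x : ℝ => 2 * x) := by
  refine ⟨ℝ, inferInstance, (fun x : ℝ => 2 * x), id, ?_, ?_⟩
  · exact ⟨(continuous_const.mul continuous_id), continuous_id, Function.surjective_id,
      fun x => (Set.finite_singleton x).subset (by simp), rfl⟩
  · refine ⟨↥ZI, inferInstance, inferInstance, inferInstance, gZ, eZ, ?_, rfl⟩
    exact ⟨gZ_continuous, eZ_embedding, eZ_denseRange, funext fun x => gZ_eZ x⟩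

end Doubling

/-- For `f : ℝ → ℝ`, `f(x) = 2x` (with the usual topology on `ℝ`), `h_Ω(f) = 0`. -/
theorem stmt_16 : hOmega (fun x : ℝ => 2 * x) = 0 := by
  unfold hOmega
  rw [hCR_doubling]
  rw [max_eq_left (sInf_le_of_le mem_etale htop_gZ_le)]
end
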